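/- Let k, c, r be integers such that k ≥ 1, r ≥ 2k, c ≡ 0 (mod 3), and 3(k−2)(k−1)/2 ≤ c ≤ 3k(k−1)/2. Then there exists an (r,c)-circulant: that is, there exist n ≥ 1 and a set S of nonzero elements of Z_n such that the circulant Circ(n, S) is r-regular and e(v) = c for every vertex v. -/

import Mathlib

open Finset SimpleGraph

/-- The circulant graph `Circ(n, S)`: vertices are `ZMod n`, and distinct
vertices `x, y` are adjacent iff `x - y ∈ S ∪ (-S)`. -/
def Circulant (n : ℕ) (S : Set (ZMod n)) : SimpleGraph (ZMod n) where
  Adj x y := x ≠ y ∧ x - y ∈ S ∪ -S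
  symm := by
    constructor
    rintro x y ⟨hxy, h⟩
    refine ⟨hxy.symm, ?_⟩
    have hyx : y - x = -(x - y) := by ring
    rw [hyx]
    rcases h with h | h
    · exact Or.inr (Set.neg_mem_neg.mpr h)
    · exact Or.inl (Set.mem_neg.mp h)
  loopless := ⟨fun x h => h.1 rfl⟩

/-- The number of edges of the subgraph of `G` induced by the open
neighbourhood of the vertex `v` (the quantity `e(v)`). -/
noncomputable def nbhdEdgeCount {V : Type*} (G : SimpleGraph V) (v : V) : ℕ :=
  Nat.card (SimpleGraph.induce (G.neighborSet v) G).edgeSet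

section ZModPart

variable {n : ℕ}

lemma circulant_adj (S : Set (ZMod n)) (x y : ZMod n) :
    (Circulant n S).Adj x y ↔ x ≠ y ∧ x - y ∈ S ∪ -S := Iff.rfl

lemma circulant_adj' {S : Set (ZMod n)} (hsym : ∀ s ∈ S, -s ∈ S) (x y : ZMod n) :
    (Circulant n S).Adj x y ↔ x ≠ y ∧ x - y ∈ S := by
  rw [circulant_adj]
  have hU : S ∪ -S = S := by
    apply Set.union_eq_self_of_subset_right
    intro z hz
    rw [Set.mem_neg] at hz
    simpa using hsym _ hz
  rw [hU]

lemma circulant_nbhd_zero {S : Set (ZMod n)} (hsym : ∀ s ∈ S, -s ∈ S)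
    (hnz : ∀ s ∈ S, s ≠ 0) :
    (Circulant n S).neighborSet 0 = S := by
  ext y
  rw [SimpleGraph.mem_neighborSet, circulant_adj' hsym]
  constructor
  · rintro ⟨h1, h2⟩
    have h3 := hsym _ h2
    simpa using h3
  · intro hy
    refine ⟨fun h => hnz y hy h.symm, ?_⟩
    have h3 := hsym _ hy
    simpa using h3

lemma circulant_adj_translate (S : Set (ZMod n)) (v x y : ZMod n) :
    (Circulant n S).Adj (v + x) (v + y) ↔ (Circulant n S).Adj x y := by
  rw [circulant_adj, circulant_adj]
  have h1 : v + x - (v + y) = x - y := by ring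
  rw [h1]
  simp

lemma circulant_mem_nbhd_translate (S : Set (ZMod n)) (v y : ZMod n) :
    y ∈ (Circulant n S).neighborSet 0 ↔ v + y ∈ (Circulant n S).neighborSet v := by
  rw [SimpleGraph.mem_neighborSet, SimpleGraph.mem_neighborSet]
  have h := circulant_adj_translate S v 0 y
  rw [add_zero] at h
  exact h.symm

noncomputable def circulantTranslateIso (S : Set (ZMod n)) (v : ZMod n) :
    (SimpleGraph.induce ((Circulant n S).neighborSet 0) (Circulant n S)) ≃g
    (SimpleGraph.induce ((Circulant n S).neighborSet v) (Circulant n S)) where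
  toEquiv := Equiv.subtypeEquiv (Equiv.addLeft v) (fun y => by
    simpa using circulant_mem_nbhd_translate S v y)
  map_rel_iff' := by
    rintro ⟨a, ha⟩ ⟨b, hb⟩
    simp only [Equiv.subtypeEquiv_apply, Equiv.coe_addLeft, SimpleGraph.comap_adj,
      Function.Embedding.coe_subtype]
    exact circulant_adj_translate S v a b

lemma nbhdEdgeCount_const (S : Set (ZMod n)) (v : ZMod n) :
    nbhdEdgeCount (Circulant n S) v = nbhdEdgeCount (Circulant n S) 0 :=
  (Nat.card_congr (circulantTranslateIso S v).mapEdgeSet).symm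

lemma circulant_nbhd_card (S : Set (ZMod n)) (hsym : ∀ s ∈ S, -s ∈ S)
    (hnz : ∀ s ∈ S, s ≠ 0) (v : ZMod n) :
    Nat.card ((Circulant n S).neighborSet v) = Nat.card S := by
  have h1 : Nat.card ((Circulant n S).neighborSet v)
      = Nat.card ((Circulant n S).neighborSet 0) :=
    (Nat.card_congr (Equiv.subtypeEquiv (Equiv.addLeft v) (fun y => by
      simpa using circulant_mem_nbhd_translate S v y))).symm
  rw [h1, circulant_nbhd_zero hsym hnz]

lemma window {z : ℤ} (hz1 : -(n:ℤ) < z) (hz2 : z < n) (h : (z : ZMod n) = 0) : z = 0 := by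
  rw [ZMod.intCast_zmod_eq_zero_iff_dvd] at h
  rcases le_or_gt 0 z with hz | hz
  · rcases eq_or_lt_of_le hz with rfl | hz'
    · rfl
    · exact absurd (Int.le_of_dvd hz' h) (by omega)
  · exfalso
    have : (n:ℤ) ∣ -z := dvd_neg.mpr h
    exact absurd (Int.le_of_dvd (by omega) this) (by omega)

lemma cast_inj_win {x y : ℤ} (h1 : -(n:ℤ) < x - y) (h2 : x - y < n)
    (h : (x : ZMod n) = y) : x = y := by
  have hz : ((x - y : ℤ) : ZMod n) = 0 := by push_cast; rw [h]; ring
  have := window h1 h2 hz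
  omega

end ZModPart

open Finset

/-- interval part `{±1, …, ±m}` -/
noncomputable def IntI (m : ℕ) : Finset ℤ := (Finset.Icc (-(m:ℤ)) m).erase 0

/-- ordered count of pairs `(a,b) ∈ A²` with `a - b ∈ A` -/
def Pcount (A : Finset ℤ) : ℕ := ((A ×ˢ A).filter fun q => q.1 - q.2 ∈ A).card

lemma card_filter_prod (s t : Finset ℤ) (p : ℤ → ℤ → Prop) [∀ a b, Decidable (p a b)] :
    ((s ×ˢ t).filter fun q => p q.1 q.2).card = ∑ a ∈ s, (t.filter (p a)).card := by
  rw [Finset.card_filter]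
  rw [Finset.sum_product' (f := fun a b => if p a b then 1 else 0)]
  exact Finset.sum_congr rfl fun a _ => (Finset.card_filter _ _).symm

lemma mem_IntI {m : ℕ} {x : ℤ} : x ∈ IntI m ↔ x ≠ 0 ∧ -(m:ℤ) ≤ x ∧ x ≤ m := by
  simp [IntI, and_assoc]

lemma IntI_card (m : ℕ) : (IntI m).card = 2 * m := by
  have : (0:ℤ) ∈ Finset.Icc (-(m:ℤ)) m := by simp
  rw [IntI, Finset.card_erase_of_mem this, Int.card_Icc]
  omega

lemma card_filter_prod' (s t : Finset ℤ) (p : ℤ → ℤ → Prop) [∀ a b, Decidable (p a b)] :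
    ((s ×ˢ t).filter fun q => p q.1 q.2).card = ∑ b ∈ t, (s.filter (fun a => p a b)).card := by
  rw [Finset.card_filter]
  rw [Finset.sum_product_right' (f := fun a b => if p a b then 1 else 0)]
  exact Finset.sum_congr rfl fun b _ => (Finset.card_filter _ _).symm

lemma count_diag (s t : Finset ℤ) (u : ℤ) :
    ((s ×ˢ t).filter fun q => q.1 - q.2 = u).card = (s.filter fun a => a - u ∈ t).card := by
  rw [card_filter_prod s t fun a b => a - b = u]
  rw [Finset.card_filter (fun a => a - u ∈ t)]
  apply Finset.sum_congr rfl; intro a _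
  have h : (t.filter fun b => a - b = u) = t.filter fun b => b = a - u := by
    apply Finset.filter_congr; intros; constructor <;> (intro h; omega)
  rw [h, Finset.filter_eq']
  split <;> simp

lemma Pcount_delta (m : ℕ) (t : ℤ) (h1 : (m:ℤ) < t) (h2 : t ≤ 2*m+1) :
    Pcount (IntI m ∪ {t, -t}) = Pcount (IntI m) + 6 * (2*(m:ℤ)+1-t).toNat := by
  have hm0 : (0:ℤ) ≤ (m:ℤ) := Int.natCast_nonneg m
  set I := IntI m with hI
  set T := ({t, -t} : Finset ℤ) with hT
  set J := I ∪ T with hJdef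
  have hTmem : ∀ x : ℤ, x ∈ T ↔ x = t ∨ x = -t := by intro x; simp [hT]
  have hJ' : ∀ x : ℤ, x ∈ J ↔ x ∈ I ∨ x = t ∨ x = -t := by
    intro x; simp only [hJdef, Finset.mem_union, hTmem x]
  have hJ : ∀ x : ℤ, x ∈ J ↔ (x ≠ 0 ∧ -(m:ℤ) ≤ x ∧ x ≤ m) ∨ x = t ∨ x = -t := by
    intro x; rw [hJ', mem_IntI]
  have hImem : ∀ x : ℤ, x ∈ I ↔ x ≠ 0 ∧ -(m:ℤ) ≤ x ∧ x ≤ m := fun x => mem_IntI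
  -- the 1-D filter computations
  have F1 : (I.filter fun b => t - b ∈ J) = Finset.Icc (t - m) m := by
    ext x; rw [Finset.mem_filter, hImem, hJ, Finset.mem_Icc]
    constructor
    · rintro ⟨h3, h4⟩; omega
    · intro h3; omega
  have F2 : (I.filter fun b => -t - b ∈ J) = Finset.Icc (-(m:ℤ)) (m - t) := by
    ext x; rw [Finset.mem_filter, hImem, hJ, Finset.mem_Icc]
    constructor
    · rintro ⟨h3, h4⟩; omega
    · intro h3; omega
  have F3 : (I.filter fun a => a - t ∈ J) = Finset.Icc (t - m) m := by
    ext x; rw [Finset.mem_filter, hImem, hJ, Finset.mem_Icc]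
    constructor
    · rintro ⟨h3, h4⟩; omega
    · intro h3; omega
  have F4 : (I.filter fun a => a - -t ∈ J) = Finset.Icc (-(m:ℤ)) (m - t) := by
    ext x; rw [Finset.mem_filter, hImem, hJ, Finset.mem_Icc]
    constructor
    · rintro ⟨h3, h4⟩; omega
    · intro h3; omega
  have F5 : (I.filter fun a => a - t ∈ I) = Finset.Icc (t - m) m := by
    ext x; rw [Finset.mem_filter, hImem, hImem, Finset.mem_Icc]
    constructor
    · rintro ⟨h3, h4⟩; omega
    · intro h3; omega
  have F6 : (I.filter fun a => a - -t ∈ I) = Finset.Icc (-(m:ℤ)) (m - t) := by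
    ext x; rw [Finset.mem_filter, hImem, hImem, Finset.mem_Icc]
    constructor
    · rintro ⟨h3, h4⟩; omega
    · intro h3; omega
  have hIccCard1 : (Finset.Icc (t - (m:ℤ)) m).card = (2*(m:ℤ)+1-t).toNat := by
    rw [Int.card_Icc]; omega
  have hIccCard2 : (Finset.Icc (-(m:ℤ)) ((m:ℤ) - t)).card = (2*(m:ℤ)+1-t).toNat := by
    rw [Int.card_Icc]; omega
  -- disjointness facts
  have hIT : ∀ x : ℤ, x ∈ I → x ∈ T → False := by
    intro x hx ht; rw [hImem] at hx; rw [hTmem] at ht; omega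
  have hdisjIT : Disjoint (I ×ˢ I ∪ I ×ˢ T) (T ×ˢ I ∪ T ×ˢ T) := by
    rw [Finset.disjoint_left]
    rintro ⟨a, b⟩ hmem hmem'
    rw [Finset.mem_union, Finset.mem_product, Finset.mem_product] at hmem hmem'
    rcases hmem with h | h <;> rcases hmem' with h' | h' <;> exact hIT a h.1 h'.1
  have hdisj2 : Disjoint (I ×ˢ I) (I ×ˢ T) := by
    rw [Finset.disjoint_left]
    rintro ⟨a, b⟩ hmem hmem'
    rw [Finset.mem_product] at hmem hmem'
    exact hIT b hmem.2 hmem'.2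
  have hdisj3 : Disjoint (T ×ˢ I) (T ×ˢ T) := by
    rw [Finset.disjoint_left]
    rintro ⟨a, b⟩ hmem hmem'
    rw [Finset.mem_product] at hmem hmem'
    exact hIT b hmem.2 hmem'.2
  -- split the product
  have hprod : J ×ˢ J = (I ×ˢ I ∪ I ×ˢ T) ∪ (T ×ˢ I ∪ T ×ˢ T) := by
    rw [hJdef, Finset.union_product, Finset.product_union, Finset.product_union]
  have hD1 : Disjoint
      (((I ×ˢ I).filter fun q => q.1 - q.2 ∈ J) ∪ ((I ×ˢ T).filter fun q => q.1 - q.2 ∈ J))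
      (((T ×ˢ I).filter fun q => q.1 - q.2 ∈ J) ∪ ((T ×ˢ T).filter fun q => q.1 - q.2 ∈ J)) := by
    rw [Finset.disjoint_union_left]
    constructor <;> (rw [Finset.disjoint_union_right]; constructor) <;>
      (rw [Finset.disjoint_left]; rintro ⟨a, b⟩ hq hq';
        simp only [Finset.mem_filter, Finset.mem_product] at hq hq';
        exact hIT a hq.1.1 hq'.1.1)
  rw [Pcount, hprod, Finset.filter_union, Finset.filter_union, Finset.filter_union,
    Finset.card_union_of_disjoint hD1,
    Finset.card_union_of_disjoint (Finset.disjoint_filter_filter hdisj2),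
    Finset.card_union_of_disjoint (Finset.disjoint_filter_filter hdisj3)]
  -- piece X_TT
  have hXTT : ((T ×ˢ T).filter fun q => q.1 - q.2 ∈ J).card = 0 := by
    rw [Finset.card_eq_zero, Finset.filter_eq_empty_iff]
    rintro ⟨a, b⟩ hmem
    rw [Finset.mem_product, hTmem, hTmem] at hmem
    rw [hJ]; omega
  -- piece X_IT
  have hXIT : ((I ×ˢ T).filter fun q => q.1 - q.2 ∈ J).card = 2 * (2*(m:ℤ)+1-t).toNat := by
    rw [card_filter_prod' I T fun a b => a - b ∈ J]
    have ht2 : t ∉ ({-t} : Finset ℤ) := by simp; omega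
    rw [show T = insert t {-t} from rfl, Finset.sum_insert ht2, Finset.sum_singleton,
      F3, F4, hIccCard1, hIccCard2]
    omega
  -- piece X_TI
  have hXTI : ((T ×ˢ I).filter fun q => q.1 - q.2 ∈ J).card = 2 * (2*(m:ℤ)+1-t).toNat := by
    rw [card_filter_prod T I fun a b => a - b ∈ J]
    have ht2 : t ∉ ({-t} : Finset ℤ) := by simp; omega
    rw [show T = insert t {-t} from rfl, Finset.sum_insert ht2, Finset.sum_singleton,
      F1, F2, hIccCard1, hIccCard2]
    omega
  -- piece X_II
  have hXII : ((I ×ˢ I).filter fun q => q.1 - q.2 ∈ J).card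
      = Pcount I + 2 * (2*(m:ℤ)+1-t).toNat := by
    show _ = ((I ×ˢ I).filter fun q => q.1 - q.2 ∈ I).card + 2 * (2*(m:ℤ)+1-t).toNat
    have hsplit : ((I ×ˢ I).filter fun q => q.1 - q.2 ∈ J)
        = ((I ×ˢ I).filter fun q => q.1 - q.2 ∈ I)
          ∪ (((I ×ˢ I).filter fun q => q.1 - q.2 = t) ∪ ((I ×ˢ I).filter fun q => q.1 - q.2 = -t)) := by
      rw [← Finset.filter_or, ← Finset.filter_or]
      apply Finset.filter_congr
      intro q _; rw [hJ']
    have hd1 : Disjoint ((I ×ˢ I).filter fun q => q.1 - q.2 ∈ I)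
        (((I ×ˢ I).filter fun q => q.1 - q.2 = t) ∪ ((I ×ˢ I).filter fun q => q.1 - q.2 = -t)) := by
      rw [Finset.disjoint_left]
      rintro q hq hq'
      rw [Finset.mem_filter, hImem] at hq
      rw [Finset.mem_union, Finset.mem_filter, Finset.mem_filter] at hq'
      omega
    have hd2 : Disjoint ((I ×ˢ I).filter fun q => q.1 - q.2 = t)
        ((I ×ˢ I).filter fun q => q.1 - q.2 = -t) := by
      rw [Finset.disjoint_left]
      rintro q hq hq'
      rw [Finset.mem_filter] at hq hq'
      omega
    rw [hsplit, Finset.card_union_of_disjoint hd1, Finset.card_union_of_disjoint hd2,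
      count_diag, count_diag, F5, F6, hIccCard1, hIccCard2]
    omega
  rw [hXTT, hXIT, hXTI, hXII]
  omega

lemma IntI_succ (m : ℕ) : IntI (m+1) = IntI m ∪ {((m:ℤ)+1), -((m:ℤ)+1)} := by
  ext x
  simp only [mem_IntI, Finset.mem_union, Finset.mem_insert, Finset.mem_singleton]
  push_cast
  omega

lemma Pcount_IntI (m : ℕ) : Pcount (IntI m) = 3 * m * (m - 1) := by
  induction m with
  | zero =>
    have : IntI 0 = ∅ := by ext x; simp [mem_IntI]; omega
    simp [Pcount, this]
  | succ s ih =>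
    have h := Pcount_delta s ((s:ℤ)+1) (by omega) (by omega)
    rw [← IntI_succ] at h
    rw [h, ih]
    have h2 : ((2*(s:ℤ)+1 - ((s:ℤ)+1)).toNat) = s := by omega
    rw [h2]
    cases s with
    | zero => rfl
    | succ u => simp only [Nat.add_sub_cancel]; ring

lemma Pcount_J (m : ℕ) (t : ℤ) (h1 : (m:ℤ) < t) (h2 : t ≤ 2*m+1) :
    Pcount (IntI m ∪ {t, -t}) = 3 * m * (m - 1) + 6 * (2*(m:ℤ)+1-t).toNat := by
  rw [Pcount_delta m t h1 h2, Pcount_IntI]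

lemma J_card (m : ℕ) (t : ℤ) (h1 : (m:ℤ) < t) :
    (IntI m ∪ {t, -t}).card = 2*m + 2 := by
  have hm0 : (0:ℤ) ≤ (m:ℤ) := Int.natCast_nonneg m
  have hd : Disjoint (IntI m) ({t, -t} : Finset ℤ) := by
    rw [Finset.disjoint_left]
    intro x hx hx'
    rw [mem_IntI] at hx
    simp only [Finset.mem_insert, Finset.mem_singleton] at hx'
    omega
  rw [Finset.card_union_of_disjoint hd, IntI_card]
  have : t ∉ ({-t} : Finset ℤ) := by simp; omega
  rw [Finset.card_insert_of_notMem this, Finset.card_singleton]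

/-- iteratively add far-apart pairs `±u` to a finset, tracking a bound -/
def padF (A : Finset ℤ) (M : ℤ) : ℕ → Finset ℤ × ℤ
  | 0 => (A, M)
  | p+1 =>
    let q := padF A M p
    (q.1 ∪ {2*q.2+1, -(2*q.2+1)}, 2*q.2+1)

lemma padF_spec (A : Finset ℤ) (M : ℤ) (hM : 1 ≤ M)
    (hsub : ∀ a ∈ A, a ≠ 0 ∧ -M ≤ a ∧ a ≤ M)
    (hsym : ∀ a ∈ A, -a ∈ A) (p : ℕ) :
    M ≤ (padF A M p).2 ∧
    (∀ a ∈ (padF A M p).1, a ≠ 0 ∧ -(padF A M p).2 ≤ a ∧ a ≤ (padF A M p).2) ∧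
    (∀ a ∈ (padF A M p).1, -a ∈ (padF A M p).1) ∧
    (padF A M p).1.card = A.card + 2*p ∧
    Pcount (padF A M p).1 = Pcount A := by
  induction p with
  | zero => exact ⟨le_refl M, hsub, hsym, by simp [padF], rfl⟩
  | succ p ih =>
    obtain ⟨hle, hsub', hsym', hcard', hP'⟩ := ih
    set B := (padF A M p).1 with hBdef
    set N := (padF A M p).2 with hNdef
    have hpad : padF A M (p+1) = (B ∪ {2*N+1, -(2*N+1)}, 2*N+1) := rfl
    set u : ℤ := 2*N+1 with hu
    have hN1 : 1 ≤ N := le_trans hM hle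
    have hnewmem : ∀ x : ℤ, x ∈ B ∪ {u, -u} ↔ x ∈ B ∨ x = u ∨ x = -u := by
      intro x; simp only [Finset.mem_union, Finset.mem_insert, Finset.mem_singleton]
    refine ⟨?_, ?_, ?_, ?_, ?_⟩
    · rw [hpad]; simp only; omega
    · rw [hpad]; intro a ha
      rw [hnewmem] at ha
      simp only
      rcases ha with h | h | h
      · have := hsub' a h; omega
      · omega
      · omega
    · rw [hpad]; intro a ha
      simp only at ha ⊢
      rw [hnewmem] at ha
      rw [hnewmem]
      rcases ha with h | h | h
      · exact Or.inl (hsym' a h)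
      · right; right; omega
      · right; left; omega
    · rw [hpad]; simp only
      have h1 : u ∉ B := fun h => by have := hsub' u h; omega
      have h2 : -u ∉ B := fun h => by have := hsub' (-u) h; omega
      have hd : Disjoint B ({u, -u} : Finset ℤ) := by
        rw [Finset.disjoint_left]
        intro x hx hx'
        simp only [Finset.mem_insert, Finset.mem_singleton] at hx'
        rcases hx' with rfl | rfl
        · exact h1 hx
        · exact h2 hx
      rw [Finset.card_union_of_disjoint hd]
      have : u ∉ ({-u} : Finset ℤ) := by simp; omega
      rw [Finset.card_insert_of_notMem this, Finset.card_singleton, hcard']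
      ring
    · rw [hpad]; simp only
      have hfilter : ((B ∪ {u, -u}) ×ˢ (B ∪ {u, -u})).filter
          (fun q => q.1 - q.2 ∈ B ∪ {u, -u})
          = (B ×ˢ B).filter (fun q => q.1 - q.2 ∈ B) := by
        ext ⟨a, b⟩
        simp only [Finset.mem_filter, Finset.mem_product]
        constructor
        · rintro ⟨⟨ha, hb⟩, hab⟩
          rw [hnewmem] at ha hb hab
          -- extract bounds
          have bda : a ∈ B → (a ≠ 0 ∧ -N ≤ a ∧ a ≤ N) := hsub' a
          have bdb : b ∈ B → (b ≠ 0 ∧ -N ≤ b ∧ b ≤ N) := hsub' b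
          have bdab : a - b ∈ B → (a - b ≠ 0 ∧ -N ≤ a - b ∧ a - b ≤ N) := hsub' (a-b)
          rcases ha with ha | ha | ha
          · rcases hb with hb | hb | hb
            · -- both in B
              refine ⟨⟨ha, hb⟩, ?_⟩
              rcases hab with h | h | h
              · exact h
              · exfalso; have := bda ha; have := bdb hb; omega
              · exfalso; have := bda ha; have := bdb hb; omega
            · exfalso; have := bda ha
              rcases hab with h | h | h
              · have := bdab h; omega
              · omega
              · omega
            · exfalso; have := bda ha
              rcases hab with h | h | h
              · have := bdab h; omega
              · omega
              · omega
          · exfalso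
            rcases hb with hb | hb | hb
            · have := bdb hb
              rcases hab with h | h | h
              · have := bdab h; omega
              · omega
              · omega
            · rcases hab with h | h | h
              · have := bdab h; omega
              · omega
              · omega
            · rcases hab with h | h | h
              · have := bdab h; omega
              · omega
              · omega
          · exfalso
            rcases hb with hb | hb | hb
            · have := bdb hb
              rcases hab with h | h | h
              · have := bdab h; omega
              · omega
              · omega
            · rcases hab with h | h | h
              · have := bdab h; omega
              · omega
              · omega
            · rcases hab with h | h | h
              · have := bdab h; omega
              · omega
              · omega
        · rintro ⟨⟨ha, hb⟩, hab⟩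
          exact ⟨⟨(hnewmem a).mpr (Or.inl ha), (hnewmem b).mpr (Or.inl hb)⟩,
            (hnewmem (a-b)).mpr (Or.inl hab)⟩
      rw [Pcount, hfilter, ← Pcount, hP']

section Transfer

lemma transfer_main (A : Finset ℤ) (M : ℤ) (n : ℕ)
    (hM : 1 ≤ M)
    (hA : ∀ a ∈ A, a ≠ 0 ∧ -M ≤ a ∧ a ≤ M)
    (hsymA : ∀ a ∈ A, -a ∈ A)
    (hn : (n:ℤ) = 4*M+2)
    (H : Set (ZMod n)) (hH : H ⊆ {((2*M+1 : ℤ) : ZMod n)})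
    (S : Set (ZMod n)) (hS : S = ((fun a : ℤ => ((a : ZMod n))) '' ↑A) ∪ H) :
    (∀ s ∈ S, s ≠ 0) ∧ (∀ s ∈ S, -s ∈ S) ∧
    Nat.card S = A.card + H.ncard ∧
    2 * nbhdEdgeCount (Circulant n S) 0 = Pcount A := by
  haveI : NeZero n := ⟨by omega⟩
  set hel : ZMod n := ((2*M+1 : ℤ) : ZMod n) with hhel
  have hwin : ∀ x y : ℤ, -(n:ℤ) < x - y → x - y < n → ((x : ZMod n) = y) → x = y :=
    fun x y h1 h2 h => cast_inj_win h1 h2 h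
  have himg : ∀ a ∈ A, ((a : ℤ) : ZMod n) ∈ S := by
    intro a ha
    rw [hS]
    exact Or.inl ⟨a, Finset.mem_coe.mpr ha, rfl⟩
  have hmem_cases : ∀ s ∈ S, (∃ a ∈ A, ((a : ℤ) : ZMod n) = s) ∨ s = hel := by
    intro s hs
    rw [hS] at hs
    rcases hs with ⟨a, ha, rfl⟩ | hs
    · exact Or.inl ⟨a, Finset.mem_coe.mp ha, rfl⟩
    · exact Or.inr (hH hs)
  -- nonzero
  have hnz : ∀ s ∈ S, s ≠ 0 := by
    intro s hs
    rcases hmem_cases s hs with ⟨a, ha, rfl⟩ | rfl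
    · obtain ⟨h0, hl, hr⟩ := hA a ha
      intro h
      exact h0 (hwin a 0 (by omega) (by omega) (by rw [h]; push_cast; ring))
    · intro h
      have := hwin (2*M+1) 0 (by omega) (by omega) (by rw [hhel] at h; rw [h]; push_cast; ring)
      omega
  -- symmetry
  have hsym : ∀ s ∈ S, -s ∈ S := by
    intro s hs
    rw [hS] at hs
    rcases hs with ⟨a, ha, rfl⟩ | hs
    · refine hS ▸ Or.inl ⟨-a, ?_, by push_cast; ring⟩
      exact Finset.mem_coe.mpr (hsymA a (Finset.mem_coe.mp ha))
    · have hseq : s = hel := hH hs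
      have hadd : hel + hel = 0 := by
        rw [hhel]
        have : ((2*M+1 : ℤ) : ZMod n) + ((2*M+1 : ℤ) : ZMod n) = (((4*M+2 : ℤ)) : ZMod n) := by
          push_cast; ring
        rw [this, ← hn]
        exact_mod_cast ZMod.natCast_self n
      have hns : -s = s := by
        rw [hseq, neg_eq_iff_add_eq_zero, hadd]
      rw [hns, hS]
      exact Or.inr hs
  -- the "h" element has no neighbours in S
  have hdiffA : ∀ a b : ℤ, a ∈ A → b ∈ A → ((((a : ℤ) : ZMod n) - b) ∈ S ↔ a - b ∈ A) := by
    intro a b ha hb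
    obtain ⟨ha0, hal, har⟩ := hA a ha
    obtain ⟨hb0, hbl, hbr⟩ := hA b hb
    have hcast : ((a : ℤ) : ZMod n) - b = (((a - b : ℤ)) : ZMod n) := by push_cast; ring
    constructor
    · intro h
      rw [hcast] at h
      rcases hmem_cases _ h with ⟨c, hc, hce⟩ | hce
      · obtain ⟨hc0, hcl, hcr⟩ := hA c hc
        have := hwin c (a - b) (by omega) (by omega) hce
        rwa [← this]
      · exfalso
        have := hwin (a - b) (2*M+1) (by omega) (by omega) (by rw [hce] )
        omega
    · intro h
      rw [hcast]
      exact himg _ h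
  have hell : ∀ y : ZMod n, y ∈ S → ¬ (Circulant n S).Adj hel y := by
    intro y hy hadj
    rw [circulant_adj' hsym] at hadj
    obtain ⟨hne, hmem⟩ := hadj
    rcases hmem_cases y hy with ⟨b, hb, rfl⟩ | rfl
    · obtain ⟨hb0, hbl, hbr⟩ := hA b hb
      have hcast : hel - ((b : ℤ) : ZMod n) = (((2*M+1 - b : ℤ)) : ZMod n) := by
        rw [hhel]; push_cast; ring
      rw [hcast] at hmem
      rcases hmem_cases _ hmem with ⟨c, hc, hce⟩ | hce
      · obtain ⟨hc0, hcl, hcr⟩ := hA c hc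
        have := hwin c (2*M+1 - b) (by omega) (by omega) hce
        omega
      · rw [hhel] at hce
        have := hwin (2*M+1 - b) (2*M+1) (by omega) (by omega) hce
        omega
    · rw [sub_self] at hmem
      exact hnz 0 hmem rfl
  refine ⟨hnz, hsym, ?_, ?_⟩
  -- cardinality
  · have hfin1 : ((fun a : ℤ => ((a : ZMod n))) '' ↑A).Finite := (A.finite_toSet).image _
    have hfin2 : H.Finite := (Set.finite_singleton hel).subset hH
    have hdisj : Disjoint ((fun a : ℤ => ((a : ZMod n))) '' ↑A) H := by
      rw [Set.disjoint_left]
      rintro x ⟨a, ha, rfl⟩ hx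
      have hxe : ((a : ℤ) : ZMod n) = hel := hH hx
      obtain ⟨h0, hl, hr⟩ := hA a (Finset.mem_coe.mp ha)
      rw [hhel] at hxe
      have := hwin a (2*M+1) (by omega) (by omega) hxe
      omega
    rw [hS, Nat.card_coe_set_eq, Set.ncard_union_eq hdisj hfin1 hfin2]
    congr 1
    rw [Set.ncard_image_of_injOn, Set.ncard_coe_finset]
    intro x hx y hy hxy
    obtain ⟨h0x, hlx, hrx⟩ := hA x (Finset.mem_coe.mp hx)
    obtain ⟨h0y, hly, hry⟩ := hA y (Finset.mem_coe.mp hy)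
    exact hwin x y (by omega) (by omega) hxy
  -- edge count
  · classical
    rw [nbhdEdgeCount, circulant_nbhd_zero hsym hnz]
    haveI fS : Fintype ↥S := (Set.toFinite S).fintype
    set G' := SimpleGraph.induce S (Circulant n S) with hG'
    haveI : DecidableRel G'.Adj := Classical.decRel _
    rw [Nat.card_eq_fintype_card, ← SimpleGraph.edgeFinset_card,
      SimpleGraph.two_mul_card_edgeFinset, Pcount]
    symm
    apply Finset.card_bij (i := fun (q : ℤ × ℤ)
        (hq : q ∈ (A ×ˢ A).filter fun q => q.1 - q.2 ∈ A) =>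
      ((⟨((q.1 : ℤ) : ZMod n),
          himg q.1 (Finset.mem_product.mp (Finset.mem_filter.mp hq).1).1⟩ : ↥S),
       (⟨((q.2 : ℤ) : ZMod n),
          himg q.2 (Finset.mem_product.mp (Finset.mem_filter.mp hq).1).2⟩ : ↥S)))
    · -- maps into target
      rintro ⟨a, b⟩ hq
      obtain ⟨hmemp, hdiff⟩ := Finset.mem_filter.mp hq
      obtain ⟨ha, hb⟩ := Finset.mem_product.mp hmemp
      obtain ⟨ha0, hal, har⟩ := hA a ha
      obtain ⟨hb0, hbl, hbr⟩ := hA b hb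
      obtain ⟨hd0, hdl, hdr⟩ := hA _ hdiff
      rw [Finset.mem_filter]
      refine ⟨Finset.mem_univ _, ?_⟩
      show (Circulant n S).Adj _ _
      rw [circulant_adj' hsym]
      constructor
      · intro h
        have := hwin a b (by omega) (by omega) h
        omega
      · exact (hdiffA a b ha hb).mpr hdiff
    · -- injective
      rintro ⟨a₁, b₁⟩ hq₁ ⟨a₂, b₂⟩ hq₂ heq
      obtain ⟨ha₁, hb₁⟩ := Finset.mem_product.mp (Finset.mem_filter.mp hq₁).1
      obtain ⟨ha₂, hb₂⟩ := Finset.mem_product.mp (Finset.mem_filter.mp hq₂).1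
      obtain ⟨h01, hl1, hr1⟩ := hA a₁ ha₁
      obtain ⟨h02, hl2, hr2⟩ := hA a₂ ha₂
      obtain ⟨h01', hl1', hr1'⟩ := hA b₁ hb₁
      obtain ⟨h02', hl2', hr2'⟩ := hA b₂ hb₂
      have h1 : ((a₁ : ℤ) : ZMod n) = ((a₂ : ℤ) : ZMod n) := congrArg (fun p => (p.1 : ZMod n)) heq
      have h2 : ((b₁ : ℤ) : ZMod n) = ((b₂ : ℤ) : ZMod n) := congrArg (fun p => (p.2 : ZMod n)) heq
      have e1 := hwin a₁ a₂ (by omega) (by omega) h1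
      have e2 := hwin b₁ b₂ (by omega) (by omega) h2
      simp [e1, e2]
    · -- surjective
      rintro ⟨x, y⟩ hp
      have hadj : (Circulant n S).Adj ↑x ↑y := (Finset.mem_filter.mp hp).2
      rcases hmem_cases ↑x x.2 with ⟨a, ha, hax⟩ | hxe
      · rcases hmem_cases ↑y y.2 with ⟨b, hb, hby⟩ | hye
        · have hdiffm : (↑x : ZMod n) - ↑y ∈ S := ((circulant_adj' hsym _ _).mp hadj).2
          rw [← hax, ← hby] at hdiffm
          have hab : a - b ∈ A := (hdiffA a b ha hb).mp (by
            have : ((a : ℤ) : ZMod n) - ((b : ℤ) : ZMod n) = (((a : ℤ)) : ZMod n) - b := by norm_cast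
            rwa [← this] at hdiffm ⊢)
          refine ⟨(a, b), Finset.mem_filter.mpr ⟨Finset.mem_product.mpr ⟨ha, hb⟩, hab⟩, ?_⟩
          ext
          · exact hax
          · exact hby
        · exfalso
          rw [hye] at hadj
          exact hell ↑x x.2 hadj.symm
      · exfalso
        rw [hxe] at hadj
        exact hell ↑y y.2 hadj

end Transfer
theorem exists_circulant_of_c_mod_three_eq_zero (k c r : ℕ) (hk : 1 ≤ k) (hr : 2 * k ≤ r)
    (hc : c % 3 = 0) (hlow : 3 * (k - 2) * (k - 1) / 2 ≤ c) (hhigh : c ≤ 3 * k * (k - 1) / 2) :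
    ∃ (n : ℕ), 1 ≤ n ∧ ∃ S : Set (ZMod n), (∀ s ∈ S, s ≠ 0) ∧
      (∀ v : ZMod n, Nat.card ((Circulant n S).neighborSet v) = r) ∧
      (∀ v : ZMod n, nbhdEdgeCount (Circulant n S) v = c) := by
  -- arithmetic setup
  set m : ℕ := k - 1 with hm
  set a : ℕ := m * (m - 1) with ha
  have ha2 : a % 2 = 0 := by
    have h : Even a := by
      rw [ha]
      cases m with
      | zero => simp
      | succ s =>
        simpa [Nat.mul_comm, Nat.add_sub_cancel] using Nat.even_mul_succ_self s
    obtain ⟨u, hu⟩ := h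
    omega
  have hb : k * (k - 1) = a + 2 * m := by
    have hk1 : k = m + 1 := by omega
    rw [hk1, ha]
    cases m with
    | zero => rfl
    | succ s => simp only [Nat.add_sub_cancel]; ring
  have hlow' : 3 * a / 2 ≤ c := by
    have h1 : (k - 2) * (k - 1) = a := by
      have e1 : k - 2 = m - 1 := by omega
      have e2 : k - 1 = m := by omega
      rw [e1, e2, ha, Nat.mul_comm]
    have h2 : 3 * (k - 2) * (k - 1) = 3 * a := by rw [Nat.mul_assoc, h1]
    rwa [h2] at hlow
  have hhigh' : c ≤ 3 * a / 2 + 3 * m := by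
    have h2 : 3 * k * (k - 1) = 3 * a + 6 * m := by rw [Nat.mul_assoc, hb]; ring
    rw [h2] at hhigh
    omega
  obtain ⟨j, hj1, hj2⟩ : ∃ j : ℕ, c = 3 * a / 2 + 3 * j ∧ j ≤ m := by
    refine ⟨(c - 3 * a / 2) / 3, ?_, ?_⟩ <;> omega
  -- integer set construction
  set t : ℤ := 2 * (m : ℤ) + 1 - j with ht
  have hjm : (j : ℤ) ≤ (m : ℤ) := by exact_mod_cast hj2
  have ht1 : (m : ℤ) < t := by omega
  have ht2 : t ≤ 2 * (m : ℤ) + 1 := by omega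
  set J : Finset ℤ := IntI m ∪ {t, -t} with hJ
  set M0 : ℤ := 2 * (m : ℤ) + 1 with hM0
  have hM01 : 1 ≤ M0 := by omega
  have hJsub : ∀ x ∈ J, x ≠ 0 ∧ -M0 ≤ x ∧ x ≤ M0 := by
    intro x hx
    rw [hJ, Finset.mem_union, mem_IntI, Finset.mem_insert, Finset.mem_singleton] at hx
    omega
  have hJsym : ∀ x ∈ J, -x ∈ J := by
    intro x hx
    rw [hJ, Finset.mem_union, mem_IntI, Finset.mem_insert, Finset.mem_singleton] at hx ⊢
    omega
  set p : ℕ := (r - 2 * k) / 2 with hp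
  obtain ⟨hMle, hAsub, hAsym, hAcard, hAP⟩ := padF_spec J M0 hM01 hJsub hJsym p
  set A : Finset ℤ := (padF J M0 p).1 with hA'
  set Mf : ℤ := (padF J M0 p).2 with hMf
  have hAPval : Pcount A = 3 * m * (m - 1) + 6 * j := by
    rw [hAP, Pcount_J m t ht1 ht2]
    congr 1
    have : (2 * (m : ℤ) + 1 - t).toNat = j := by omega
    omega
  have hAcard' : A.card = 2 * m + 2 + 2 * p := by
    rw [hAcard, J_card m t ht1]
  -- the modulus
  set n : ℕ := (4 * Mf + 2).toNat with hn'
  have hn : (n : ℤ) = 4 * Mf + 2 := by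
    rw [hn', Int.toNat_of_nonneg (by omega)]
  refine ⟨n, by omega, ?_⟩
  set hel : ZMod n := ((2 * Mf + 1 : ℤ) : ZMod n) with hhel
  set H : Set (ZMod n) := if r % 2 = 1 then ({hel} : Set (ZMod n)) else ∅ with hHdef
  have hH : H ⊆ {hel} := by
    rw [hHdef]; split
    · exact subset_rfl
    · exact Set.empty_subset _
  set S : Set (ZMod n) := ((fun a : ℤ => ((a : ZMod n))) '' ↑A) ∪ H with hS
  obtain ⟨hnz, hsym, hcard, hedge⟩ :=
    transfer_main A Mf n (by omega) hAsub hAsym hn H hH S hS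
  have hHcard : H.ncard = r % 2 := by
    by_cases hodd : r % 2 = 1
    · rw [hHdef, if_pos hodd, Set.ncard_singleton, hodd]
    · rw [hHdef, if_neg hodd, Set.ncard_empty]
      omega
  refine ⟨S, hnz, ?_, ?_⟩
  · intro v
    rw [circulant_nbhd_card S hsym hnz v, hcard, hAcard', hHcard]
    omega
  · intro v
    rw [nbhdEdgeCount_const S v]
    have h2c : 2 * c = 3 * m * (m - 1) + 6 * j := by
      have hma : 3 * m * (m - 1) = 3 * a := by rw [Nat.mul_assoc, ha]
      rw [hma]
      omega
    omega
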